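/- In Manià's example, for ν ≥ 2 define y_ν(s) = νs for 0 ≤ s < s₀(ν) := 1/(√3 ν^{3/2}) and y_ν(s) = (s − 2/(3√3 ν^{3/2}))^{1/3} for s₀(ν) ≤ s ≤ 1. Then y_ν is Lipschitz with ‖y_ν'‖_∞ ≤ ν, y_ν(0) = 0, and y_ν → y in W^{1,1}([0,1]) where y(s) = s^{1/3}, while F(y_ν) = ∫_0¹ (y_ν³ − s)²(y_ν')⁶ ds ≥ (68/(945√3))·ν^{3/2} → +∞. -/

import Mathlib

open MeasureTheory Set Filter Topology

lemma cube_root_cube {x : ℝ} (hx : 0 ≤ x) : (x^3 : ℝ) ^ ((1:ℝ)/3) = x := by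
  rw [← Real.rpow_natCast x 3, ← Real.rpow_mul hx]
  norm_num

lemma rpow_third_pow_three {x : ℝ} (hx : 0 ≤ x) : (x ^ ((1:ℝ)/3))^3 = x := by
  rw [← Real.rpow_natCast (x ^ ((1:ℝ)/3)) 3, ← Real.rpow_mul hx]
  norm_num

lemma cube_neg_two_thirds {x : ℝ} (hx : 0 < x) : (x^3 : ℝ) ^ (-(2:ℝ)/3) = (x^2)⁻¹ := by
  rw [← Real.rpow_natCast x 3, ← Real.rpow_mul hx.le,
    show ((3:ℕ):ℝ) * (-(2)/3) = ((-2:ℤ):ℝ) by push_cast; ring, Real.rpow_intCast]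
  rw [zpow_neg]
  norm_num [zpow_ofNat]

lemma cbrt_subadd {x y : ℝ} (hx : 0 ≤ x) (hy : 0 ≤ y) :
    (x + y) ^ ((1:ℝ)/3) ≤ x ^ ((1:ℝ)/3) + y ^ ((1:ℝ)/3) := by
  have hp0 : 0 ≤ x ^ ((1:ℝ)/3) := Real.rpow_nonneg hx _
  have hq0 : 0 ≤ y ^ ((1:ℝ)/3) := Real.rpow_nonneg hy _
  have h1 : x + y ≤ (x ^ ((1:ℝ)/3) + y ^ ((1:ℝ)/3))^3 := by
    have e1 := rpow_third_pow_three hx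
    have e2 := rpow_third_pow_three hy
    nlinarith [mul_nonneg hp0 hq0, mul_nonneg (mul_nonneg hp0 hp0) hq0,
      mul_nonneg (mul_nonneg hq0 hq0) hp0]
  calc (x + y) ^ ((1:ℝ)/3) ≤ ((x ^ ((1:ℝ)/3) + y ^ ((1:ℝ)/3))^3) ^ ((1:ℝ)/3) :=
        Real.rpow_le_rpow (by linarith) h1 (by norm_num)
    _ = _ := cube_root_cube (by linarith)

lemma cube_diff_lip {p q r : ℝ} (hr : 0 < r) (hq : r ≤ q) (hp : q ≤ p) :
    p - q ≤ (p^3 - q^3) / (3 * r^2) := by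
  rw [le_div_iff₀ (by positivity)]
  have h1 : 3*r^2 ≤ p^2 + p*q + q^2 := by nlinarith
  have h2 : (p - q) * (3*r^2) ≤ (p - q) * (p^2 + p*q + q^2) :=
    mul_le_mul_of_nonneg_left h1 (by linarith)
  nlinarith

lemma intInt_congr {f g : ℝ → ℝ} {a b : ℝ} (hf : IntervalIntegrable f volume a b)
    (h : EqOn f g (uIcc a b)) : IntervalIntegrable g volume a b :=
  hf.congr_ae ((ae_restrict_iff' measurableSet_uIoc).2
    (Eventually.of_forall (fun _ hx => h (uIoc_subset_uIcc hx))))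

lemma lip_gen (ν s₀ a : ℝ) (hν0 : 0 < ν) (hs₀a : 0 < s₀ - a)
    (hjunc : (s₀ - a) ^ ((1:ℝ)/3) = ν * s₀)
    (h3r : 3 * ((s₀ - a) ^ ((1:ℝ)/3))^2 = 1/ν) :
    ∀ x y : ℝ, 0 ≤ x → x ≤ y →
      |(if y < s₀ then ν*y else (y-a)^((1:ℝ)/3))
        - (if x < s₀ then ν*x else (x-a)^((1:ℝ)/3))| ≤ ν*(y-x) := by
  have hr0 : 0 < (s₀ - a) ^ ((1:ℝ)/3) := Real.rpow_pos_of_pos hs₀a _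
  have claim2 : ∀ u v : ℝ, s₀ ≤ u → u ≤ v →
      (u-a)^((1:ℝ)/3) ≤ (v-a)^((1:ℝ)/3) ∧
      (v-a)^((1:ℝ)/3) - (u-a)^((1:ℝ)/3) ≤ ν * (v - u) := by
    intro u v hu huv
    have hua : (0:ℝ) < u - a := by linarith
    have hva : (0:ℝ) < v - a := by linarith
    have hqp : (u-a)^((1:ℝ)/3) ≤ (v-a)^((1:ℝ)/3) :=
      Real.rpow_le_rpow hua.le (by linarith) (by norm_num)
    refine ⟨hqp, ?_⟩
    have hrq : (s₀ - a) ^ ((1:ℝ)/3) ≤ (u-a)^((1:ℝ)/3) :=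
      Real.rpow_le_rpow hs₀a.le (by linarith) (by norm_num)
    have key := cube_diff_lip hr0 hrq hqp
    rw [rpow_third_pow_three hva.le, rpow_third_pow_three hua.le] at key
    calc (v-a)^((1:ℝ)/3) - (u-a)^((1:ℝ)/3)
        ≤ (v - a - (u - a)) / (3 * ((s₀ - a) ^ ((1:ℝ)/3))^2) := key
      _ = ν * (v - u) := by
          rw [h3r]; field_simp [hν0.ne']; ring
  intro x y hx hxy
  rcases lt_or_ge y s₀ with hy | hy
  · have hx' : x < s₀ := lt_of_le_of_lt hxy hy
    rw [if_pos hy, if_pos hx', abs_of_nonneg (by nlinarith)]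
    nlinarith
  · rw [if_neg (not_lt.2 hy)]
    rcases lt_or_ge x s₀ with hx' | hx'
    · rw [if_pos hx']
      have h1 := claim2 s₀ y le_rfl hy
      rw [hjunc] at h1
      have hge : ν * x ≤ (y-a)^((1:ℝ)/3) := by nlinarith [h1.1]
      rw [abs_of_nonneg (by linarith)]
      nlinarith [h1.2]
    · rw [if_neg (not_lt.2 hx')]
      have h1 := claim2 x y hx' hxy
      rw [abs_of_nonneg (by linarith [h1.1])]
      exact h1.2

lemma lip (ν : ℝ) (hν : 2 ≤ ν) :
    LipschitzOnWith (Real.toNNReal ν)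
      (fun s => if s < 1 / (Real.sqrt 3 * ν ^ ((3:ℝ)/2)) then ν * s
        else (s - 2 / (3 * Real.sqrt 3 * ν ^ ((3:ℝ)/2))) ^ ((1:ℝ)/3)) (Icc (0:ℝ) 1) := by
  have hν0 : (0:ℝ) < ν := by linarith
  have ht0 : 0 < Real.sqrt ν := Real.sqrt_pos.2 hν0
  have ht2 : (Real.sqrt ν)^2 = ν := Real.sq_sqrt hν0.le
  have hc0 : 0 < Real.sqrt 3 := Real.sqrt_pos.2 (by norm_num)
  have hc2 : (Real.sqrt 3)^2 = 3 := Real.sq_sqrt (by norm_num)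
  set t := Real.sqrt ν
  set c := Real.sqrt 3
  have hb : ν ^ ((3:ℝ)/2) = t^3 := by
    rw [← ht2, ← Real.rpow_natCast t 2, ← Real.rpow_mul ht0.le,
      show ((2:ℕ):ℝ)*((3:ℝ)/2) = ((3:ℕ):ℝ) by norm_num, Real.rpow_natCast]
  set s₀ : ℝ := 1 / (c * ν ^ ((3:ℝ)/2)) with hs₀
  set a : ℝ := 2 / (3 * c * ν ^ ((3:ℝ)/2)) with ha
  have e1 : s₀ - a = (1/(c*t))^3 := by
    rw [hs₀, ha, hb, div_pow, one_pow, mul_pow,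
      show c^3 = c^2 * c from by ring, hc2]
    rw [div_sub_div _ _ (by positivity) (by positivity)]
    rw [div_eq_div_iff (by positivity) (by positivity)]
    ring
  have hs₀a : 0 < s₀ - a := by rw [e1]; positivity
  have e2 : (s₀ - a) ^ ((1:ℝ)/3) = 1/(c*t) := by
    rw [e1]; exact cube_root_cube (by positivity)
  have hjunc : (s₀ - a) ^ ((1:ℝ)/3) = ν * s₀ := by
    rw [e2, hs₀, hb, ← ht2]
    field_simp
  have h3r : 3 * ((s₀ - a) ^ ((1:ℝ)/3))^2 = 1/ν := by
    rw [e2, ← ht2]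
    rw [div_pow, one_pow, mul_pow, hc2]
    field_simp
  apply LipschitzOnWith.of_dist_le_mul
  intro x hx y hy
  rw [Real.dist_eq, Real.dist_eq, Real.coe_toNNReal ν hν0.le]
  rcases le_total x y with h | h
  · rw [abs_sub_comm, show |x - y| = y - x from by
      rw [abs_sub_comm]; exact abs_of_nonneg (by linarith)]
    exact lip_gen ν s₀ a hν0 hs₀a hjunc h3r x y hx.1 h
  · rw [abs_of_nonneg (by linarith : (0:ℝ) ≤ x - y)]
    exact lip_gen ν s₀ a hν0 hs₀a hjunc h3r y x hy.1 h

lemma energy (ν : ℝ) (hν : 2 ≤ ν) :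
    68 / (945 * Real.sqrt 3) * ν ^ ((3:ℝ)/2) ≤
      ∫ s in (0:ℝ)..1,
        ((if s < 1 / (Real.sqrt 3 * ν ^ ((3:ℝ)/2)) then ν * s
          else (s - 2 / (3 * Real.sqrt 3 * ν ^ ((3:ℝ)/2))) ^ ((1:ℝ)/3)) ^ 3 - s) ^ 2 *
        (if s < 1 / (Real.sqrt 3 * ν ^ ((3:ℝ)/2)) then ν
          else 1/3 * (s - 2 / (3 * Real.sqrt 3 * ν ^ ((3:ℝ)/2))) ^ (-(2:ℝ)/3)) ^ 6 := by
  have hν0 : (0:ℝ) < ν := by linarith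
  have ht0 : 0 < Real.sqrt ν := Real.sqrt_pos.2 hν0
  have ht2 : (Real.sqrt ν)^2 = ν := Real.sq_sqrt hν0.le
  have hc0 : 0 < Real.sqrt 3 := Real.sqrt_pos.2 (by norm_num)
  have hc2 : (Real.sqrt 3)^2 = 3 := Real.sq_sqrt (by norm_num)
  set t := Real.sqrt ν
  set c := Real.sqrt 3
  have ht1 : 1 ≤ t := by nlinarith
  have hc1 : 1 ≤ c := by nlinarith
  have hb : ν ^ ((3:ℝ)/2) = t^3 := by
    rw [← ht2, ← Real.rpow_natCast t 2, ← Real.rpow_mul ht0.le,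
      show ((2:ℕ):ℝ)*((3:ℝ)/2) = ((3:ℕ):ℝ) by norm_num, Real.rpow_natCast]
  have hc3 : c^3 = 3*c := by rw [pow_succ, hc2]
  have hc5 : c^5 = 9*c := by
    rw [show c^5 = (c^2)^2*c by ring, hc2]; ring
  have hc7 : c^7 = 27*c := by
    rw [show c^7 = (c^2)^3*c by ring, hc2]; ring
  set s₀ : ℝ := 1 / (c * ν ^ ((3:ℝ)/2)) with hs₀
  set a : ℝ := 2 / (3 * c * ν ^ ((3:ℝ)/2)) with ha
  set g : ℝ → ℝ := fun s =>
    ((if s < s₀ then ν * s else (s - a) ^ ((1:ℝ)/3)) ^ 3 - s) ^ 2 *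
      (if s < s₀ then ν else 1/3 * (s - a) ^ (-(2:ℝ)/3)) ^ 6 with hg
  set h : ℝ → ℝ := fun s => ((ν*s)^3 - s)^2 * ν^6 with hh
  have hs₀pos : 0 < s₀ := by rw [hs₀, hb]; positivity
  have hs₀1 : s₀ ≤ 1 := by
    rw [hs₀, hb, div_le_one (by positivity)]
    have h3 : 1 ≤ t^3 := by nlinarith
    nlinarith
  have e1 : s₀ - a = (1/(c*t))^3 := by
    rw [hs₀, ha, hb, div_pow, one_pow, mul_pow, hc3]
    rw [div_sub_div _ _ (by positivity) (by positivity),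
      div_eq_div_iff (by positivity) (by positivity)]
    ring
  have hs₀a : 0 < s₀ - a := by rw [e1]; positivity
  have e2 : (s₀ - a) ^ ((1:ℝ)/3) = ν * s₀ := by
    rw [e1, cube_root_cube (by positivity), hs₀, hb, ← ht2]
    field_simp
  have e3 : (1:ℝ)/3 * (s₀ - a) ^ (-(2:ℝ)/3) = ν := by
    rw [e1, cube_neg_two_thirds (by positivity), div_pow, one_pow, mul_pow, hc2, ← ht2]
    field_simp
  -- equality of g with polynomial h on [0, s₀]
  have heq1 : EqOn g h (Icc 0 s₀) := by
    intro s hs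
    rw [hg, hh]
    by_cases hlt : s < s₀
    · simp only [if_pos hlt]
    · have hse : s = s₀ := le_antisymm hs.2 (not_lt.1 hlt)
      subst hse
      simp only [if_neg hlt]
      rw [e2, e3]
  -- continuity on the right piece
  have hne : ∀ x ∈ Icc s₀ (1:ℝ), x - a ≠ 0 := by
    intro x hx
    have := hx.1
    have : 0 < x - a := by linarith
    exact ne_of_gt this
  have hcont2 : ContinuousOn g (Icc s₀ 1) := by
    have hsub : ContinuousOn (fun s : ℝ => s - a) (Icc s₀ 1) :=
      (continuous_id.sub continuous_const).continuousOn
    have c1 : ContinuousOn (fun s : ℝ => (s-a) ^ ((1:ℝ)/3)) (Icc s₀ 1) :=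
      hsub.rpow_const (fun x hx => Or.inl (hne x hx))
    have c2 : ContinuousOn (fun s : ℝ => (s-a) ^ (-(2:ℝ)/3)) (Icc s₀ 1) :=
      hsub.rpow_const (fun x hx => Or.inl (hne x hx))
    have : ContinuousOn (fun s : ℝ =>
        (((s-a) ^ ((1:ℝ)/3)) ^ 3 - s) ^ 2 * (1/3 * (s-a) ^ (-(2:ℝ)/3)) ^ 6) (Icc s₀ 1) :=
      (((c1.pow 3).sub continuousOn_id).pow 2).mul ((continuousOn_const.mul c2).pow 6)
    apply this.congr
    intro s hs
    rw [hg]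
    simp only [if_neg (not_lt.2 hs.1)]
  have hint1 : IntervalIntegrable g volume 0 s₀ := by
    have : ContinuousOn g (Icc 0 s₀) := by
      apply (Continuous.continuousOn (by rw [hh]; fun_prop)).congr heq1
    apply this.intervalIntegrable_of_Icc hs₀pos.le
  have hint2 : IntervalIntegrable g volume s₀ 1 :=
    hcont2.intervalIntegrable_of_Icc hs₀1
  have hnn : 0 ≤ ∫ s in s₀..1, g s := by
    apply intervalIntegral.integral_nonneg hs₀1
    intro u _
    rw [hg]
    positivity
  have hsplit : (∫ s in (0:ℝ)..s₀, g s) + ∫ s in s₀..1, g s = ∫ s in (0:ℝ)..1, g s :=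
    intervalIntegral.integral_add_adjacent_intervals hint1 hint2
  -- value of the first integral
  have hcongr : ∫ s in (0:ℝ)..s₀, g s = ∫ s in (0:ℝ)..s₀, h s := by
    apply intervalIntegral.integral_congr
    rwa [uIcc_of_le hs₀pos.le]
  have hftc : ∫ s in (0:ℝ)..s₀, h s
      = (ν^12/7 * s₀^7 - (2/5*ν^9) * s₀^5 + ν^6/3 * s₀^3)
        - (ν^12/7 * 0^7 - (2/5*ν^9) * 0^5 + ν^6/3 * 0^3) := by
    apply intervalIntegral.integral_eq_sub_of_hasDerivAt
      (f := fun s : ℝ => ν^12/7 * s^7 - (2/5*ν^9) * s^5 + ν^6/3 * s^3)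
    · intro x _
      have d := (((hasDerivAt_pow 7 x).const_mul ((ν:ℝ)^12/7)).sub
        ((hasDerivAt_pow 5 x).const_mul (2/5*ν^9))).add
        ((hasDerivAt_pow 3 x).const_mul (ν^6/3))
      convert d using 1
      · rfl
      rw [hh]
      push_cast
      ring
    · exact (Continuous.continuousOn (by rw [hh]; fun_prop)).intervalIntegrable
  have m1 : (ν:ℝ)^12 * s₀^7 = t^3/(27*c) := by
    rw [hs₀, hb, ← ht2, div_pow, one_pow, mul_pow, hc7]
    field_simp [hc0.ne', ht0.ne']
  have m2 : (ν:ℝ)^9 * s₀^5 = t^3/(9*c) := by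
    rw [hs₀, hb, ← ht2, div_pow, one_pow, mul_pow, hc5]
    field_simp [hc0.ne', ht0.ne']
  have m3 : (ν:ℝ)^6 * s₀^3 = t^3/(3*c) := by
    rw [hs₀, hb, ← ht2, div_pow, one_pow, mul_pow, hc3]
    field_simp [hc0.ne', ht0.ne']
  have hval : ∫ s in (0:ℝ)..s₀, g s = 68 / (945 * c) * ν ^ ((3:ℝ)/2) := by
    rw [hcongr, hftc, hb]
    have : (ν:ℝ)^12/7 * s₀^7 - (2/5*ν^9) * s₀^5 + ν^6/3 * s₀^3
        = (ν^12 * s₀^7)/7 - 2/5*(ν^9*s₀^5) + (ν^6*s₀^3)/3 := by ring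
    rw [this, m1, m2, m3]
    field_simp
    ring
  calc 68 / (945 * c) * ν ^ ((3:ℝ)/2)
      = ∫ s in (0:ℝ)..s₀, g s := hval.symm
    _ ≤ (∫ s in (0:ℝ)..s₀, g s) + ∫ s in s₀..1, g s := by linarith
    _ = ∫ s in (0:ℝ)..1, g s := hsplit

set_option maxHeartbeats 1000000 in
lemma w11 (ν : ℝ) (hν : 2 ≤ ν) :
    ∫ s in (0:ℝ)..1,
      (|(if s < 1 / (Real.sqrt 3 * ν ^ ((3:ℝ)/2)) then ν * s
          else (s - 2 / (3 * Real.sqrt 3 * ν ^ ((3:ℝ)/2))) ^ ((1:ℝ)/3)) - s ^ ((1:ℝ)/3)|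
        + |(if s < 1 / (Real.sqrt 3 * ν ^ ((3:ℝ)/2)) then ν
          else 1/3 * (s - 2 / (3 * Real.sqrt 3 * ν ^ ((3:ℝ)/2))) ^ (-(2:ℝ)/3))
            - s ^ (-(2:ℝ)/3) / 3|)
      ≤ 6 / Real.sqrt ν := by
  have hν0 : (0:ℝ) < ν := by linarith
  have ht0 : 0 < Real.sqrt ν := Real.sqrt_pos.2 hν0
  have ht2 : (Real.sqrt ν)^2 = ν := Real.sq_sqrt hν0.le
  have hc0 : 0 < Real.sqrt 3 := Real.sqrt_pos.2 (by norm_num)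
  have hc2 : (Real.sqrt 3)^2 = 3 := Real.sq_sqrt (by norm_num)
  set t := Real.sqrt ν
  set c := Real.sqrt 3
  have ht1 : 1 ≤ t := by nlinarith
  have hc1 : 1 ≤ c := by nlinarith
  have hb : ν ^ ((3:ℝ)/2) = t^3 := by
    rw [← ht2, ← Real.rpow_natCast t 2, ← Real.rpow_mul ht0.le,
      show ((2:ℕ):ℝ)*((3:ℝ)/2) = ((3:ℕ):ℝ) by norm_num, Real.rpow_natCast]
  have hc3 : c^3 = 3*c := by rw [pow_succ, hc2]
  set s₀ : ℝ := 1 / (c * ν ^ ((3:ℝ)/2)) with hs₀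
  set a : ℝ := 2 / (3 * c * ν ^ ((3:ℝ)/2)) with ha
  set φ : ℝ → ℝ := fun s =>
    |(if s < s₀ then ν * s else (s - a) ^ ((1:ℝ)/3)) - s ^ ((1:ℝ)/3)|
      + |(if s < s₀ then ν else 1/3 * (s - a) ^ (-(2:ℝ)/3)) - s ^ (-(2:ℝ)/3) / 3| with hφ
  have hs₀pos : 0 < s₀ := by rw [hs₀, hb]; positivity
  have hapos : 0 < a := by rw [ha, hb]; positivity
  have hs₀1 : s₀ ≤ 1 := by
    rw [hs₀, hb, div_le_one (by positivity)]
    have h3 : 1 ≤ t^3 := by nlinarith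
    nlinarith
  have e1 : s₀ - a = (1/(c*t))^3 := by
    rw [hs₀, ha, hb, div_pow, one_pow, mul_pow, hc3]
    rw [div_sub_div _ _ (by positivity) (by positivity),
      div_eq_div_iff (by positivity) (by positivity)]
    ring
  have hs₀a : 0 < s₀ - a := by rw [e1]; positivity
  have e2 : (s₀ - a) ^ ((1:ℝ)/3) = ν * s₀ := by
    rw [e1, cube_root_cube (by positivity), hs₀, hb, ← ht2]
    field_simp
  have e3 : (1:ℝ)/3 * (s₀ - a) ^ (-(2:ℝ)/3) = ν := by
    rw [e1, cube_neg_two_thirds (by positivity), div_pow, one_pow, mul_pow, hc2, ← ht2]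
    field_simp
  -- first piece [0, s₀]
  set φ₁ : ℝ → ℝ := fun s => |ν * s - s ^ ((1:ℝ)/3)| + |ν - s ^ (-(2:ℝ)/3) / 3| with hφ₁
  have heq1 : EqOn φ φ₁ (Icc 0 s₀) := by
    intro s hs
    rw [hφ, hφ₁]
    by_cases hlt : s < s₀
    · simp only [if_pos hlt]
    · have hse : s = s₀ := le_antisymm hs.2 (not_lt.1 hlt)
      subst hse
      simp only [if_neg hlt]
      rw [e2, e3]
  have i1a : IntervalIntegrable (fun s : ℝ => ν * s - s ^ ((1:ℝ)/3)) volume 0 s₀ :=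
    ((continuous_const.mul continuous_id).intervalIntegrable _ _).sub
      (intervalIntegral.intervalIntegrable_rpow' (by norm_num))
  have i1b : IntervalIntegrable (fun s : ℝ => ν - s ^ (-(2:ℝ)/3) / 3) volume 0 s₀ :=
    (intervalIntegrable_const).sub
      ((intervalIntegral.intervalIntegrable_rpow' (by norm_num)).div_const 3)
  have i1 : IntervalIntegrable φ₁ volume 0 s₀ := i1a.abs.add i1b.abs
  have iφ1 : IntervalIntegrable φ volume 0 s₀ :=
    intInt_congr i1 (by rw [uIcc_of_le hs₀pos.le]; exact heq1.symm)
  -- bound on first piece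
  set C : ℝ := ν * s₀ + s₀ ^ ((1:ℝ)/3) + ν with hC
  set ψ : ℝ → ℝ := fun s => C + s ^ (-(2:ℝ)/3) / 3 with hψ
  have iψ : IntervalIntegrable ψ volume 0 s₀ :=
    intervalIntegrable_const.add
      ((intervalIntegral.intervalIntegrable_rpow' (by norm_num)).div_const 3)
  have hmono1 : ∀ x ∈ Icc (0:ℝ) s₀, φ₁ x ≤ ψ x := by
    intro x hx
    rw [hφ₁, hψ, hC]
    have hx0 : 0 ≤ x := hx.1
    have hx3 : x ^ ((1:ℝ)/3) ≤ s₀ ^ ((1:ℝ)/3) :=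
      Real.rpow_le_rpow hx0 hx.2 (by norm_num)
    have hx3' : 0 ≤ x ^ ((1:ℝ)/3) := Real.rpow_nonneg hx0 _
    have hn : 0 ≤ x ^ (-(2:ℝ)/3) := Real.rpow_nonneg hx0 _
    have hνx : ν * x ≤ ν * s₀ := mul_le_mul_of_nonneg_left hx.2 hν0.le
    have hνx0 : 0 ≤ ν * x := mul_nonneg hν0.le hx0
    have hs3 : 0 ≤ s₀ ^ ((1:ℝ)/3) := Real.rpow_nonneg hs₀pos.le _
    have b1 : |ν * x - x ^ ((1:ℝ)/3)| ≤ ν * s₀ + s₀ ^ ((1:ℝ)/3) := by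
      rw [abs_sub_le_iff]
      exact ⟨by linarith, by linarith⟩
    have b2 : |ν - x ^ (-(2:ℝ)/3) / 3| ≤ ν + x ^ (-(2:ℝ)/3) / 3 := by
      rw [abs_sub_le_iff]
      exact ⟨by linarith, by linarith⟩
    linarith
  have int1 : ∫ s in (0:ℝ)..s₀, φ s ≤ 2 * (ν * s₀) + 2 * s₀ ^ ((1:ℝ)/3) := by
    have step1 : ∫ s in (0:ℝ)..s₀, φ s = ∫ s in (0:ℝ)..s₀, φ₁ s :=
      intervalIntegral.integral_congr (by rw [uIcc_of_le hs₀pos.le]; exact heq1)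
    have step2 : ∫ s in (0:ℝ)..s₀, φ₁ s ≤ ∫ s in (0:ℝ)..s₀, ψ s :=
      intervalIntegral.integral_mono_on hs₀pos.le i1 iψ hmono1
    have step3 : ∫ s in (0:ℝ)..s₀, ψ s = C * s₀ + s₀ ^ ((1:ℝ)/3) := by
      rw [hψ]
      rw [intervalIntegral.integral_add intervalIntegrable_const
        ((intervalIntegral.intervalIntegrable_rpow' (by norm_num)).div_const 3)]
      rw [intervalIntegral.integral_const, intervalIntegral.integral_div,
        integral_rpow (Or.inl (by norm_num))]
      rw [Real.zero_rpow (by norm_num : (-(2:ℝ)/3) + 1 ≠ 0)]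
      norm_num
      ring
    have hs3 : 0 ≤ s₀ ^ ((1:ℝ)/3) := Real.rpow_nonneg hs₀pos.le _
    have hfin : C * s₀ + s₀ ^ ((1:ℝ)/3) ≤ 2 * (ν * s₀) + 2 * s₀ ^ ((1:ℝ)/3) := by
      rw [hC]
      have k1 : (ν*s₀)*s₀ ≤ (ν*s₀)*1 :=
        mul_le_mul_of_nonneg_left hs₀1 (mul_nonneg hν0.le hs₀pos.le)
      have k2 : (s₀ ^ ((1:ℝ)/3))*s₀ ≤ (s₀ ^ ((1:ℝ)/3))*1 :=
        mul_le_mul_of_nonneg_left hs₀1 hs3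
      nlinarith [k1, k2]
    linarith [step1.le, step2, step3.le]
  -- second piece [s₀, 1]
  set φ₃ : ℝ → ℝ := fun s => (s ^ ((1:ℝ)/3) - (s-a) ^ ((1:ℝ)/3))
      + (1/3 * (s-a) ^ (-(2:ℝ)/3) - s ^ (-(2:ℝ)/3) / 3) with hφ₃
  have hsa_pos : ∀ x ∈ Icc s₀ (1:ℝ), 0 < x - a := by
    intro x hx
    have := hx.1
    linarith
  have heq2 : EqOn φ φ₃ (Icc s₀ 1) := by
    intro s hs
    have h1 : 0 < s - a := hsa_pos s hs
    rw [hφ, hφ₃]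
    simp only [if_neg (not_lt.2 hs.1)]
    have m1 : (s-a) ^ ((1:ℝ)/3) ≤ s ^ ((1:ℝ)/3) :=
      Real.rpow_le_rpow h1.le (by linarith) (by norm_num)
    have m2 : s ^ (-(2:ℝ)/3) ≤ (s-a) ^ (-(2:ℝ)/3) :=
      Real.rpow_le_rpow_of_nonpos h1 (by linarith) (by norm_num)
    rw [abs_sub_comm,
      abs_of_nonneg (show (0:ℝ) ≤ s ^ ((1:ℝ)/3) - (s-a) ^ ((1:ℝ)/3) by linarith),
      abs_of_nonneg (show (0:ℝ) ≤ 1/3 * (s-a) ^ (-(2:ℝ)/3) - s ^ (-(2:ℝ)/3) / 3 by linarith)]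
  have j1 : IntervalIntegrable (fun s : ℝ => s ^ ((1:ℝ)/3)) volume s₀ 1 :=
    intervalIntegral.intervalIntegrable_rpow' (by norm_num)
  have j2 : IntervalIntegrable (fun s : ℝ => (s - a) ^ ((1:ℝ)/3)) volume s₀ 1 := by
    have := (intervalIntegral.intervalIntegrable_rpow' (r := (1:ℝ)/3)
      (by norm_num) (a := s₀ - a) (b := 1 - a)).comp_sub_right a
    simpa using this
  have j3 : IntervalIntegrable (fun s : ℝ => (s - a) ^ (-(2:ℝ)/3)) volume s₀ 1 := by
    have := (intervalIntegral.intervalIntegrable_rpow' (r := -(2:ℝ)/3)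
      (by norm_num) (a := s₀ - a) (b := 1 - a)).comp_sub_right a
    simpa using this
  have j4 : IntervalIntegrable (fun s : ℝ => s ^ (-(2:ℝ)/3)) volume s₀ 1 :=
    intervalIntegral.intervalIntegrable_rpow' (by norm_num)
  have iφ₃ : IntervalIntegrable φ₃ volume s₀ 1 :=
    (j1.sub j2).add ((j3.const_mul (1/3)).sub (j4.div_const 3))
  have iφ2 : IntervalIntegrable φ volume s₀ 1 :=
    intInt_congr iφ₃ (by rw [uIcc_of_le hs₀1]; exact heq2.symm)
  have hs3 : 0 ≤ s₀ ^ ((1:ℝ)/3) := Real.rpow_nonneg hs₀pos.le _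
  have int2 : ∫ s in s₀..(1:ℝ), φ s ≤ 2 * s₀ ^ ((1:ℝ)/3) := by
    have step1 : ∫ s in s₀..(1:ℝ), φ s = ∫ s in s₀..(1:ℝ), φ₃ s :=
      intervalIntegral.integral_congr (by rw [uIcc_of_le hs₀1]; exact heq2)
    have hsplit3 : ∫ s in s₀..(1:ℝ), φ₃ s
        = (∫ s in s₀..(1:ℝ), (s ^ ((1:ℝ)/3) - (s-a) ^ ((1:ℝ)/3)))
          + ∫ s in s₀..(1:ℝ), (1/3 * (s-a) ^ (-(2:ℝ)/3) - s ^ (-(2:ℝ)/3) / 3) := by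
      rw [hφ₃]
      exact intervalIntegral.integral_add (j1.sub j2)
        ((j3.const_mul (1/3)).sub (j4.div_const 3))
    have bu : ∫ s in s₀..(1:ℝ), (s ^ ((1:ℝ)/3) - (s-a) ^ ((1:ℝ)/3)) ≤ s₀ ^ ((1:ℝ)/3) := by
      have hmono : ∀ x ∈ Icc s₀ (1:ℝ),
          x ^ ((1:ℝ)/3) - (x-a) ^ ((1:ℝ)/3) ≤ s₀ ^ ((1:ℝ)/3) := by
        intro x hx
        have h1 : 0 < x - a := hsa_pos x hx
        have key : x ^ ((1:ℝ)/3) ≤ (x-a) ^ ((1:ℝ)/3) + a ^ ((1:ℝ)/3) := by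
          have hxe : x = (x - a) + a := by ring
          calc x ^ ((1:ℝ)/3) = ((x-a) + a) ^ ((1:ℝ)/3) := by rw [← hxe]
            _ ≤ (x-a) ^ ((1:ℝ)/3) + a ^ ((1:ℝ)/3) := cbrt_subadd h1.le hapos.le
        have ha3 : a ^ ((1:ℝ)/3) ≤ s₀ ^ ((1:ℝ)/3) :=
          Real.rpow_le_rpow hapos.le (by linarith) (by norm_num)
        linarith
      calc ∫ s in s₀..(1:ℝ), (s ^ ((1:ℝ)/3) - (s-a) ^ ((1:ℝ)/3))
          ≤ ∫ _ in s₀..(1:ℝ), s₀ ^ ((1:ℝ)/3) :=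
            intervalIntegral.integral_mono_on hs₀1 (j1.sub j2)
              intervalIntegrable_const hmono
        _ = (1 - s₀) * s₀ ^ ((1:ℝ)/3) := by
            rw [intervalIntegral.integral_const, smul_eq_mul]
        _ ≤ s₀ ^ ((1:ℝ)/3) := by nlinarith
    have bv : ∫ s in s₀..(1:ℝ), (1/3 * (s-a) ^ (-(2:ℝ)/3) - s ^ (-(2:ℝ)/3) / 3)
        ≤ s₀ ^ ((1:ℝ)/3) := by
      have c3 : ∫ s in s₀..(1:ℝ), (s-a) ^ (-(2:ℝ)/3)
          = ((1-a) ^ ((1:ℝ)/3) - (s₀-a) ^ ((1:ℝ)/3)) / (1/3) := by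
        rw [show (∫ s in s₀..(1:ℝ), (s-a) ^ (-(2:ℝ)/3))
            = ∫ u in (s₀-a)..(1-a), u ^ (-(2:ℝ)/3) from
          intervalIntegral.integral_comp_sub_right (fun u => u ^ (-(2:ℝ)/3)) a]
        rw [integral_rpow (Or.inl (by norm_num))]
        norm_num
      have c4 : ∫ s in s₀..(1:ℝ), s ^ (-(2:ℝ)/3)
          = ((1:ℝ) - s₀ ^ ((1:ℝ)/3)) / (1/3) := by
        rw [integral_rpow (Or.inl (by norm_num))]
        rw [show (-(2:ℝ)/3 + 1) = (1:ℝ)/3 by norm_num, Real.one_rpow]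
      rw [intervalIntegral.integral_sub (j3.const_mul (1/3)) (j4.div_const 3),
        intervalIntegral.integral_const_mul, intervalIntegral.integral_div, c3, c4]
      have q1 : (1-a) ^ ((1:ℝ)/3) ≤ 1 :=
        Real.rpow_le_one (by linarith) (by linarith) (by norm_num)
      have q2 : 0 ≤ (s₀-a) ^ ((1:ℝ)/3) := Real.rpow_nonneg hs₀a.le _
      nlinarith
    linarith [step1.le, hsplit3.le, bu, bv]
  have isplit : (∫ s in (0:ℝ)..s₀, φ s) + ∫ s in s₀..(1:ℝ), φ s = ∫ s in (0:ℝ)..1, φ s :=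
    intervalIntegral.integral_add_adjacent_intervals iφ1 iφ2
  have hνs₀t : ν * s₀ = 1/(c*t) := by
    rw [hs₀, hb, ← ht2]
    field_simp
  have h1t : 1/(c*t) ≤ 1/t :=
    one_div_le_one_div_of_le ht0 (le_mul_of_one_le_left ht0.le hc1)
  have hs₀13 : s₀ ^ ((1:ℝ)/3) ≤ 1/t := by
    have h1 : s₀ ≤ (1/t)^3 := by
      rw [hs₀, hb, div_pow, one_pow]
      exact one_div_le_one_div_of_le (by positivity)
        (le_mul_of_one_le_left (by positivity) hc1)
    calc s₀ ^ ((1:ℝ)/3) ≤ ((1/t)^3) ^ ((1:ℝ)/3) :=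
          Real.rpow_le_rpow hs₀pos.le h1 (by norm_num)
      _ = 1/t := cube_root_cube (by positivity)
  rw [← isplit]
  have hν1t : ν*s₀ ≤ 1/t := by rw [hνs₀t]; exact h1t
  have e6 : (6:ℝ)/t = 2*(1/t) + 4*(1/t) := by ring
  linarith [int1, int2, hs₀13]

/-- In Manià's example, the reparametrized functions
`y_ν(s) = νs` on `[0, 1/(√3 ν^{3/2}))`, `y_ν(s) = (s − 2/(3√3 ν^{3/2}))^{1/3}`
elsewhere, are Lipschitz with constant `ν`, satisfy `y_ν(0) = 0`, converge to
`y(s) = s^{1/3}` in `W^{1,1}([0,1])`, yet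
`F(y_ν) ≥ (68/(945√3))·ν^{3/2} → +∞`. -/
theorem stmt16 (Y Yd : ℝ → ℝ → ℝ)
    (hY : ∀ ν s : ℝ, Y ν s =
      if s < 1 / (Real.sqrt 3 * ν ^ ((3:ℝ)/2)) then ν * s
      else (s - 2 / (3 * Real.sqrt 3 * ν ^ ((3:ℝ)/2))) ^ ((1:ℝ)/3))
    (hYd : ∀ ν s : ℝ, Yd ν s =
      if s < 1 / (Real.sqrt 3 * ν ^ ((3:ℝ)/2)) then ν
      else (1/3) * (s - 2 / (3 * Real.sqrt 3 * ν ^ ((3:ℝ)/2))) ^ (-(2:ℝ)/3)) :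
    (∀ ν : ℝ, 2 ≤ ν →
      LipschitzOnWith (Real.toNNReal ν) (Y ν) (Icc (0:ℝ) 1) ∧
      Y ν 0 = 0 ∧
      (68 / (945 * Real.sqrt 3)) * ν ^ ((3:ℝ)/2) ≤
        ∫ s in (0:ℝ)..1, ((Y ν s) ^ 3 - s) ^ 2 * (Yd ν s) ^ 6) ∧
    Tendsto (fun ν : ℝ =>
        ∫ s in (0:ℝ)..1,
          (|Y ν s - s ^ ((1:ℝ)/3)| + |Yd ν s - s ^ (-(2:ℝ)/3) / 3|))
      atTop (nhds 0) ∧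
    Tendsto (fun ν : ℝ =>
        ∫ s in (0:ℝ)..1, ((Y ν s) ^ 3 - s) ^ 2 * (Yd ν s) ^ 6)
      atTop atTop := by
  have hsqrt : Tendsto Real.sqrt atTop atTop := by
    rw [show Real.sqrt = fun x : ℝ => x ^ ((1:ℝ)/2) from
      funext fun x => Real.sqrt_eq_rpow x]
    exact tendsto_rpow_atTop (by norm_num)
  refine ⟨fun ν hν => ⟨?_, ?_, ?_⟩, ?_, ?_⟩
  · have hYf : Y ν = fun s => if s < 1 / (Real.sqrt 3 * ν ^ ((3:ℝ)/2)) then ν * s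
        else (s - 2 / (3 * Real.sqrt 3 * ν ^ ((3:ℝ)/2))) ^ ((1:ℝ)/3) :=
      funext fun s => hY ν s
    rw [hYf]
    exact lip ν hν
  · have hν0 : (0:ℝ) < ν := by linarith
    rw [hY ν 0, if_pos (by positivity), mul_zero]
  · simp only [hY, hYd]
    exact energy ν hν
  · apply tendsto_of_tendsto_of_tendsto_of_le_of_le'
      (g := fun _ : ℝ => (0:ℝ)) (h := fun ν : ℝ => 6 / Real.sqrt ν)
      tendsto_const_nhds (Tendsto.div_atTop tendsto_const_nhds hsqrt)
    · filter_upwards with ν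
      apply intervalIntegral.integral_nonneg (by norm_num)
      intro u _
      positivity
    · filter_upwards [eventually_ge_atTop (2:ℝ)] with ν hν
      simp only [hY, hYd]
      exact w11 ν hν
  · apply tendsto_atTop_mono' atTop
      (f₁ := fun ν : ℝ => 68 / (945 * Real.sqrt 3) * ν ^ ((3:ℝ)/2))
    · filter_upwards [eventually_ge_atTop (2:ℝ)] with ν hν
      simp only [hY, hYd]
      exact energy ν hν
    · have hc0 : 0 < Real.sqrt 3 := Real.sqrt_pos.2 (by norm_num)
      exact (tendsto_rpow_atTop (by norm_num)).const_mul_atTop (by positivity)
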